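/- Fix integers n_x, n_y ≥ 0, n_κ ∈ ℤ and α, ρ > 0. Then there exists ε with 0 < ε < α/2 such that for every pair of sets X, Y in the class C^ε_{α,ρ} with cardinalities n_x, n_y, and for every κ ∈ closure(D_{0,ε}), the function f(λ) = (−1)^s · ∏_{y ∈ Y ⊖ (X ⊕ {κ}^{⊕ n_κ})} sinh(iζ+y−λ)/sinh(iζ+λ−y) satisfies |1 + f(λ)| ≥ ρ/2 for every λ ∈ closure(D_{0,ε}); in particular 1+f has no zeroes in closure(D_{0,ε}). -/

import Mathlib

noncomputable section
open Complex Filter Topology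
open scoped Classical

namespace XXZ

/-- The open horizontal strip `S_a` of half-width `a` around the real axis. -/
def strip (a : ℝ) : Set ℂ := {z : ℂ | |z.im| < a}

/-- `ζ_m = min(ζ, π - ζ)`. -/
def zetam (ζ : ℝ) : ℝ := min ζ (Real.pi - ζ)

/-- The ball `B_r` of holomorphic functions on the strip `S_{ζ_m/2}` with sup-norm `≤ r`. -/
def holBall (ζ r : ℝ) : Set (ℂ → ℂ) :=
  {f | DifferentiableOn ℂ f (strip (zetam ζ / 2)) ∧
    ∀ z ∈ strip (zetam ζ / 2), Norm.norm (f z) ≤ r}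

/-- Hyperbolic cotangent. -/
def cothC (z : ℂ) : ℂ := Complex.cosh z / Complex.sinh z

/-- The kernel `K(ξ) = sgn(π-2ζ)/(2iπ) [coth(ξ-iζ_m) - coth(ξ+iζ_m)]`. -/
def Kker (ζ : ℝ) (ξ : ℂ) : ℂ :=
  ((Real.sign (Real.pi - 2 * ζ) : ℝ) : ℂ) / (2 * (Real.pi : ℂ) * Complex.I) *
    (cothC (ξ - Complex.I * (zetam ζ : ℝ)) - cothC (ξ + Complex.I * (zetam ζ : ℝ)))

/-- The bare energy `e₀(ξ) = h - 2J sin²ζ/(sinh ξ sinh(ξ-iζ))`. -/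
def e0fun (J h ζ : ℝ) (ξ : ℂ) : ℂ :=
  (h : ℂ) - 2 * (J : ℂ) * ((Real.sin ζ : ℝ) : ℂ) ^ 2 /
    (Complex.sinh ξ * Complex.sinh (ξ - Complex.I * (ζ : ℝ)))

/-- `ℵ = (J/T) sinh η = -i (J/T) sin ζ`. -/
def alephC (J T ζ : ℝ) : ℂ := -Complex.I * (J : ℂ) * ((Real.sin ζ : ℝ) : ℂ) / (T : ℂ)

/-- Integral of `f` along the circle `∂D_{0,ε}` from `κ` to `v` in the positive direction. -/
def arcIntegral (ε : ℝ) (κ v : ℂ) (f : ℂ → ℂ) : ℂ :=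
  ∫ θ in (Complex.arg κ)..(toIocMod Real.two_pi_pos (Complex.arg κ) (Complex.arg v)),
    f (circleMap 0 ε θ) * (circleMap 0 ε θ * Complex.I)

/-- The determination `Ln[1+e^A]` of the logarithm of `1 + e^A` along `∂D_{0,ε}`,
`Ln[1+e^A](v) = ∫_κ^v A'(u)/(1+e^{-A(u)}) du + log(1+e^{A(κ)})`,
the integral running from the base point `κ` to `v` in positive direction along `∂D_{0,ε}`. -/
def cLog (ε : ℝ) (κ : ℂ) (A : ℂ → ℂ) (v : ℂ) : ℂ :=
  arcIntegral ε κ v (fun u => deriv A u / (1 + Complex.exp (-(A u)))) +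
    Complex.log (1 + Complex.exp (A κ))

/-- Reduction of `z` modulo `iπℤ` to the fundamental strip `|Im| ≤ π/2`. -/
def reduceIpi (z : ℂ) : ℂ := z - ((round (z.im / Real.pi) : ℤ) : ℂ) * ((Real.pi : ℂ) * Complex.I)

/-- The function `θ`: the `iπ`-periodic determination of
`-i log(sinh(iζ+λ)/sinh(iζ-λ))` used in the paper. -/
def theta (ζ : ℝ) (lam : ℂ) : ℂ :=
  if |(reduceIpi lam).im| < zetam ζ then
    Complex.I * Complex.log
      (Complex.sinh (Complex.I * (ζ : ℝ) + reduceIpi lam) /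
        Complex.sinh (Complex.I * (ζ : ℝ) - reduceIpi lam))
  else
    -(Real.pi : ℂ) * ((Real.sign (Real.pi - 2 * ζ) : ℝ) : ℂ) +
      Complex.I * Complex.log
        (Complex.sinh (Complex.I * (ζ : ℝ) + reduceIpi lam) /
          Complex.sinh (reduceIpi lam - Complex.I * (ζ : ℝ)))

/-- The `+`-boundary value `θ₊` of `θ` on its cuts. -/
def thetaPlus (ζ : ℝ) (lam : ℂ) : ℂ :=
  if -(zetam ζ) ≤ (reduceIpi lam).im ∧ (reduceIpi lam).im < zetam ζ then
    Complex.I * Complex.log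
      (Complex.sinh (Complex.I * (ζ : ℝ) + reduceIpi lam) /
        Complex.sinh (Complex.I * (ζ : ℝ) - reduceIpi lam))
  else
    -(Real.pi : ℂ) * ((Real.sign (Real.pi - 2 * ζ) : ℝ) : ℂ) +
      Complex.I * Complex.log
        (Complex.sinh (Complex.I * (ζ : ℝ) + reduceIpi lam) /
          Complex.sinh (reduceIpi lam - Complex.I * (ζ : ℝ)))

/-- Congruence modulo `iπℤ`. -/
def modIpi (z w : ℂ) : Prop := ∃ k : ℤ, z - w = (k : ℂ) * ((Real.pi : ℂ) * Complex.I)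
/-- Membership of the (pairwise distinct) hole family `x` and particle family `y`
in the class `C^ε_{α,ρ}` (relative to the spin parameter `s`). -/
def InClassFam (ζ ε α ρ : ℝ) (s : ℤ) {nx ny : ℕ} (x : Fin nx → ℂ) (y : Fin ny → ℂ) : Prop :=
  Function.Injective x ∧ Function.Injective y ∧
  (∀ a, x a ∈ Metric.ball (0 : ℂ) ε) ∧
  (∀ b, y b ∈ strip (Real.pi / 2) \
      (Metric.ball (0 : ℂ) ε ∪ Metric.ball (Complex.I * (zetam ζ : ℝ)) α ∪
        Metric.ball (-(Complex.I * (zetam ζ : ℝ))) α)) ∧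
  ρ < Norm.norm ((-1 : ℂ) ^ s *
      (∏ b, Complex.sinh (Complex.I * (ζ : ℝ) + y b) /
        Complex.sinh (Complex.I * (ζ : ℝ) - y b)) + 1)

/-- `A_∞(ξ) = -iπs + i Σ_{y ∈ 𝕐_κ} θ(ξ - y)` where
`𝕐_κ = Y ⊖ (X ⊕ {κ}^{⊕(s+n_y-n_x)})` (signed multiplicities). -/
def Ainf (ζ : ℝ) (s : ℤ) {nx ny : ℕ} (x : Fin nx → ℂ) (y : Fin ny → ℂ) (κ ξ : ℂ) : ℂ :=
  -(Real.pi : ℂ) * Complex.I * (s : ℂ) +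
    Complex.I * ((∑ b, theta ζ (ξ - y b)) - (∑ a, theta ζ (ξ - x a)) -
      (((s + ny - nx : ℤ) : ℂ)) * theta ζ (ξ - κ))

/-- The driving term `w_N`. -/
def wN (J T ζ : ℝ) (N : ℕ) (ξ : ℂ) : ℂ :=
  (N : ℂ) * Complex.log
    (Complex.sinh (ξ - alephC J T ζ / (N : ℂ)) *
        Complex.sinh (ξ + alephC J T ζ / (N : ℂ) - Complex.I * (ζ : ℝ)) /
      (Complex.sinh (ξ + alephC J T ζ / (N : ℂ)) *
        Complex.sinh (ξ - alephC J T ζ / (N : ℂ) - Complex.I * (ζ : ℝ))))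

/-- `ϖ_N = h - T w_N`. -/
def varpiN (J h T ζ : ℝ) (N : ℕ) (lam : ℂ) : ℂ := (h : ℂ) - (T : ℂ) * wN J T ζ N lam

/-- `χ_{N;ε}(λ) = -∮_{∂D_{0,ε}} K(λ-u) ϖ_N(u)/(1+e^{-A_∞(u)}) du`. -/
def chiN (J h T ζ ε : ℝ) (N : ℕ) (Ainfty : ℂ → ℂ) (lam : ℂ) : ℂ :=
  -circleIntegral
      (fun u => Kker ζ (lam - u) * varpiN J h T ζ N u / (1 + Complex.exp (-(Ainfty u)))) 0 ε

/-- `χ_{∞;ε}(λ) = -∮_{∂D_{0,ε}} K(λ-u) e₀(u)/(1+e^{-A_∞(u)}) du`. -/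
def chiInf (J h ζ ε : ℝ) (Ainfty : ℂ → ℂ) (lam : ℂ) : ℂ :=
  -circleIntegral
      (fun u => Kker ζ (lam - u) * e0fun J h ζ u / (1 + Complex.exp (-(Ainfty u)))) 0 ε

/-- `𝔏(ν,x) = 1/(1+e^{-A_∞(ν)-x})`. -/
def scrL (Ainfty : ℂ → ℂ) (ν x : ℂ) : ℂ := 1 / (1 + Complex.exp (-(Ainfty ν) - x))

/-- `G[γ](ν,t) = γ(ν)γ'(ν) ∂₂𝔏(ν,tγ(ν)/T) + (1-t) γ(ν)² A_∞'(ν) ∂₂²𝔏(ν,tγ(ν)/T)`. -/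
def Gfun (Ainfty : ℂ → ℂ) (T : ℝ) (γ : ℂ → ℂ) (ν : ℂ) (t : ℝ) : ℂ :=
  γ ν * deriv γ ν * deriv (scrL Ainfty ν) ((t : ℂ) * γ ν / (T : ℂ)) +
    (1 - (t : ℂ)) * (γ ν) ^ 2 * deriv Ainfty ν *
      deriv (deriv (scrL Ainfty ν)) ((t : ℂ) * γ ν / (T : ℂ))

/-- The operator `O_{T,N}`. -/
def Oop (J h T ζ ε : ℝ) (N : ℕ) (Ainfty : ℂ → ℂ) (κ : ℂ) (ξ : ℂ → ℂ) : ℂ → ℂ :=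
  fun lam => chiN J h T ζ ε N Ainfty lam + (1 / (T : ℂ)) *
    circleIntegral
      (fun u => Kker ζ (lam - u) *
        arcIntegral ε κ u
          (fun ν => ∫ t in (0:ℝ)..1, Gfun Ainfty T (fun z => ξ z - varpiN J h T ζ N z) ν t)) 0 ε

/-- The operator `O_T` (infinite Trotter number). -/
def OopT (J h T ζ ε : ℝ) (Ainfty : ℂ → ℂ) (κ : ℂ) (ξ : ℂ → ℂ) : ℂ → ℂ :=
  fun lam => chiInf J h ζ ε Ainfty lam + (1 / (T : ℂ)) *
    circleIntegral
      (fun u => Kker ζ (lam - u) *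
        arcIntegral ε κ u
          (fun ν => ∫ t in (0:ℝ)..1, Gfun Ainfty T (fun z => ξ z - e0fun J h ζ z) ν t)) 0 ε

/-- The constant `𝔠 = 2 sup_{S_{ζ_m/2}} |χ_{∞;ε}|`. -/
def cBound (J h ζ ε : ℝ) (Ainfty : ℂ → ℂ) : ℝ :=
  2 * sSup ((fun lam => Norm.norm (chiInf J h ζ ε Ainfty lam)) '' strip (zetam ζ / 2))

/-- The function
`f(λ) = (-1)^s ∏_{y ∈ Y ⊖ (X ⊕ {κ}^{⊕n_κ})} sinh(iζ+y-λ)/sinh(iζ+λ-y)`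
(signed multiplicities in the product). -/
def fProd (ζ : ℝ) (s : ℤ) {nx ny : ℕ} (x : Fin nx → ℂ) (y : Fin ny → ℂ)
    (nκ : ℤ) (κ lam : ℂ) : ℂ :=
  (-1 : ℂ) ^ s *
    ((∏ b, Complex.sinh (Complex.I * (ζ : ℝ) + y b - lam) /
        Complex.sinh (Complex.I * (ζ : ℝ) + lam - y b)) /
      ((∏ a, Complex.sinh (Complex.I * (ζ : ℝ) + x a - lam) /
          Complex.sinh (Complex.I * (ζ : ℝ) + lam - x a)) *
        (Complex.sinh (Complex.I * (ζ : ℝ) + κ - lam) /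
            Complex.sinh (Complex.I * (ζ : ℝ) + lam - κ)) ^ nκ))

open Real
set_option maxHeartbeats 2000000

lemma abs_two' : ‖(2:ℂ)‖ = 2 := by norm_num

lemma abs_cosh_le (z : ℂ) : ‖(Complex.cosh z)‖ ≤ Real.cosh z.re := by
  rw [Complex.cosh, Real.cosh_eq, norm_div, abs_two']
  have h := norm_add_le (Complex.exp z) (Complex.exp (-z))
  rw [Complex.norm_exp, Complex.norm_exp, Complex.neg_re] at h
  linarith

lemma abs_sinh_le (z : ℂ) : ‖(Complex.sinh z)‖ ≤ Real.cosh z.re := by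
  rw [Complex.sinh, Real.cosh_eq, norm_div, abs_two']
  have h := norm_sub_le (Complex.exp z) (Complex.exp (-z))
  rw [Complex.norm_exp, Complex.norm_exp, Complex.neg_re] at h
  linarith

-- decomposition
lemma sinh_decomp (x y : ℝ) : Complex.sinh (x + y * Complex.I) =
    (Real.sinh x * Real.cos y : ℝ) + (Real.cosh x * Real.sin y : ℝ) * Complex.I := by
  rw [Complex.sinh_add, Complex.cosh_mul_I, Complex.sinh_mul_I]
  push_cast [← Complex.ofReal_sinh, ← Complex.ofReal_cosh]
  ring

lemma abs_sinh_sq (z : ℂ) :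
    (‖(Complex.sinh z)‖)^2 = (Real.sinh z.re)^2 + (Real.sin z.im)^2 := by
  conv_lhs => rw [← Complex.re_add_im z, sinh_decomp]
  rw [Complex.sq_norm, Complex.normSq_add_mul_I]
  have h1 := Real.sin_sq_add_cos_sq z.im
  have h2 := Real.cosh_sq z.re
  nlinarith

lemma sin_im_le_abs_sinh (z : ℂ) : |Real.sin z.im| ≤ ‖(Complex.sinh z)‖ := by
  have h := abs_sinh_sq z
  have h2 : (0:ℝ) ≤ ‖(Complex.sinh z)‖ := norm_nonneg _
  nlinarith [_root_.sq_abs (Real.sin z.im), sq_nonneg (Real.sinh z.re), sq_nonneg (‖(Complex.sinh z)‖ - |Real.sin z.im|), abs_nonneg (Real.sin z.im)]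

lemma sinh_re_le_abs_sinh (z : ℂ) : |Real.sinh z.re| ≤ ‖(Complex.sinh z)‖ := by
  have h := abs_sinh_sq z
  have h2 : (0:ℝ) ≤ ‖(Complex.sinh z)‖ := norm_nonneg _
  nlinarith [_root_.sq_abs (Real.sinh z.re), sq_nonneg (Real.sin z.im), sq_nonneg (‖(Complex.sinh z)‖ - |Real.sinh z.re|), abs_nonneg (Real.sinh z.re)]

-- sinh linear bound on unit ball
lemma abs_sinh_lin {z : ℂ} (hz : ‖z‖ ≤ 1) : ‖(Complex.sinh z)‖ ≤ 2 * ‖z‖ := by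
  have hconv : Convex ℝ (Metric.closedBall (0:ℂ) 1) := convex_closedBall _ _
  have hder : ∀ w ∈ Metric.closedBall (0:ℂ) 1, HasDerivWithinAt Complex.sinh (Complex.cosh w) (Metric.closedBall (0:ℂ) 1) w :=
    fun w _ => (Complex.hasDerivAt_sinh w).hasDerivWithinAt
  have hbnd : ∀ w ∈ Metric.closedBall (0:ℂ) 1, ‖Complex.cosh w‖ ≤ 2 := by
    intro w hw
    have h1 : ‖(Complex.cosh w)‖ ≤ Real.cosh w.re := abs_cosh_le w
    have h2 : Real.cosh w.re ≤ Real.cosh 1 := by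
      rw [Real.cosh_le_cosh]
      have : |w.re| ≤ ‖w‖ := Complex.abs_re_le_norm w
      have hw' : ‖w‖ ≤ 1 := by simpa [Complex.dist_eq] using hw
      rw [abs_one]; linarith
    have h3 : Real.cosh 1 ≤ 2 := by
      rw [Real.cosh_eq]
      have := Real.exp_one_lt_d9
      have h4 : Real.exp (-1) ≤ 1 := by
        rw [Real.exp_le_one_iff]; norm_num
      linarith
    calc ‖Complex.cosh w‖ = ‖(Complex.cosh w)‖ := rfl
      _ ≤ 2 := by linarith
  have := hconv.norm_image_sub_le_of_norm_hasDerivWithin_le hder hbnd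
    (Metric.mem_closedBall_self (by norm_num)) (by simpa [Complex.dist_eq] using hz)
  simpa using this


lemma sin_lb_of_mem {a θ : ℝ} (ha : 0 ≤ a) (h1 : a ≤ θ) (h2 : θ ≤ π - a) :
    Real.sin a ≤ Real.sin θ := by
  have hpi := Real.pi_pos
  have ha2 : a ≤ π/2 := by linarith
  rcases le_total θ (π/2) with h | h
  · exact Real.sin_le_sin_of_le_of_le_pi_div_two (by linarith) h h1
  · rw [← Real.sin_pi_sub θ]
    exact Real.sin_le_sin_of_le_of_le_pi_div_two (by linarith) (by linarith) (by linarith)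

lemma abs_sin_eq {r : ℝ} (h : |r| ≤ π) : |Real.sin r| = Real.sin |r| := by
  rcases abs_cases r with ⟨he, hs⟩ | ⟨he, hs⟩
  · rw [he]; exact abs_of_nonneg (Real.sin_nonneg_of_nonneg_of_le_pi hs (he ▸ h))
  · have hle : -r ≤ π := he ▸ h
    have hn : 0 ≤ Real.sin (-r) := Real.sin_nonneg_of_nonneg_of_le_pi (by linarith) hle
    rw [he, Real.sin_neg]
    rw [Real.sin_neg] at hn
    rw [abs_of_nonpos (by linarith)]

lemma abs_sin_lb {b θ : ℝ} (hb0 : 0 ≤ b) (hb : b ≤ π/4)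
    (h1 : -(3*π/4) ≤ θ) (h2 : θ ≤ 7*π/4) (h3 : b ≤ |θ|) (h4 : b ≤ |θ - π|) :
    Real.sin b ≤ |Real.sin θ| := by
  have hpi := Real.pi_pos
  set k : ℤ := round (θ / π) with hk
  have hround : |θ/π - k| ≤ 1/2 := abs_sub_round (θ/π)
  have heq : θ - k * π = (θ/π - k) * π := by field_simp
  have hr : |θ - k * π| ≤ π/2 := by
    rw [heq, abs_mul, abs_of_pos hpi]
    nlinarith
  have h0 := Real.sin_add_int_mul_pi (θ - k*π) k
  rw [sub_add_cancel] at h0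
  have habs : |Real.sin θ| = |Real.sin (θ - k*π)| := by
    rcases Int.even_or_odd k with he | ho
    · rw [h0, he.neg_one_zpow, one_mul]
    · rw [h0, ho.neg_one_zpow, neg_one_mul, abs_neg]
  have hk1 : (-1 : ℤ) ≤ k := by
    have hd : (-3/4 : ℝ) ≤ θ/π := by rw [le_div_iff₀ hpi]; linarith
    rcases abs_le.mp hround with ⟨hl, hr'⟩
    have : (-2 : ℝ) < (k:ℝ) := by linarith
    have : (-2 : ℤ) < k := by exact_mod_cast this
    omega
  have hk2 : k ≤ 2 := by
    have hd : θ/π ≤ 7/4 := by rw [div_le_iff₀ hpi]; linarith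
    rcases abs_le.mp hround with ⟨hl, hr'⟩
    have : (k : ℝ) < 3 := by linarith
    have : k < 3 := by exact_mod_cast this
    omega
  have hbr : b ≤ |θ - k * π| := by
    interval_cases k
    · push_cast
      rcases abs_cases (θ - (-1:ℝ) * π) with ⟨he, _⟩ | ⟨he, _⟩ <;> nlinarith
    · simpa using h3
    · simpa using h4
    · push_cast
      rcases abs_cases (θ - (2:ℝ) * π) with ⟨he, _⟩ | ⟨he, _⟩ <;> nlinarith
  rw [habs, abs_sin_eq (by linarith)]
  exact Real.sin_le_sin_of_le_of_le_pi_div_two (by linarith) hr hbr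


-- sinh(a+b) - sinh(a-b) = 2 cosh a sinh b
lemma sinh_diff_id (a b : ℂ) :
    Complex.sinh (a + b) - Complex.sinh (a - b) = 2 * Complex.cosh a * Complex.sinh b := by
  simp only [Complex.sinh, Complex.cosh, sub_eq_add_neg, neg_add, neg_neg, Complex.exp_add]
  ring

-- sinh(u-l) sinh v - sinh u sinh(l+v) = -(sinh(u+v) sinh l)
lemma sinh_prod_id (u v l : ℂ) :
    Complex.sinh (u - l) * Complex.sinh v - Complex.sinh u * Complex.sinh (l + v)
      = -(Complex.sinh (u + v) * Complex.sinh l) := by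
  simp only [Complex.sinh, sub_eq_add_neg, neg_add, neg_neg, Complex.exp_add]
  ring

-- product bound
lemma abs_prod_le {ι : Type*} (s : Finset ι) (f : ι → ℂ) (M : ℝ) (hM : 0 ≤ M)
    (hf : ∀ i ∈ s, ‖(f i)‖ ≤ M) :
    ‖(∏ i ∈ s, f i)‖ ≤ M ^ s.card := by
  rw [norm_prod]
  calc (∏ i ∈ s, ‖(f i)‖) ≤ ∏ _i ∈ s, M :=
        Finset.prod_le_prod (fun i _ => norm_nonneg _) hf
    _ = M ^ s.card := by rw [Finset.prod_const]

-- product difference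
lemma abs_prod_sub_prod {ι : Type*} (s : Finset ι) (f g : ι → ℂ) (M : ℝ) (hM : 1 ≤ M)
    (hf : ∀ i ∈ s, ‖(f i)‖ ≤ M) (hg : ∀ i ∈ s, ‖(g i)‖ ≤ M) :
    ‖(∏ i ∈ s, f i - ∏ i ∈ s, g i)‖ ≤ M ^ s.card * ∑ i ∈ s, ‖(f i - g i)‖ := by
  induction s using Finset.cons_induction with
  | empty => simp
  | cons a t ha ih =>
    have hf' : ∀ i ∈ t, ‖(f i)‖ ≤ M := fun i hi => hf i (Finset.mem_cons_of_mem hi)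
    have hg' : ∀ i ∈ t, ‖(g i)‖ ≤ M := fun i hi => hg i (Finset.mem_cons_of_mem hi)
    rw [Finset.prod_cons, Finset.prod_cons, Finset.sum_cons, Finset.card_cons]
    have key : f a * ∏ i ∈ t, f i - g a * ∏ i ∈ t, g i
        = (f a - g a) * ∏ i ∈ t, f i + g a * (∏ i ∈ t, f i - ∏ i ∈ t, g i) := by ring
    rw [key]
    have h1 : ‖((f a - g a) * ∏ i ∈ t, f i)‖ ≤ ‖(f a - g a)‖ * M ^ t.card := by
      rw [norm_mul]
      exact mul_le_mul_of_nonneg_left (abs_prod_le t f M (by linarith) hf') (norm_nonneg _)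
    have h2 : ‖(g a * (∏ i ∈ t, f i - ∏ i ∈ t, g i))‖
        ≤ M * (M ^ t.card * ∑ i ∈ t, ‖(f i - g i)‖) := by
      rw [norm_mul]
      exact mul_le_mul (hg a (Finset.mem_cons_self a t)) (ih hf' hg') (norm_nonneg _) (by linarith)
    calc ‖_‖ ≤ _ := norm_add_le _ _
      _ ≤ ‖(f a - g a)‖ * M ^ t.card + M * (M ^ t.card * ∑ i ∈ t, ‖(f i - g i)‖) := by
          exact add_le_add h1 h2
      _ ≤ M ^ (t.card + 1) * (‖(f a - g a)‖ + ∑ i ∈ t, ‖(f i - g i)‖) := by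
          have hMp : (0:ℝ) ≤ M ^ t.card := by positivity
          have hMM : M ^ t.card ≤ M ^ (t.card + 1) := by
            exact pow_le_pow_right₀ (by linarith) (Nat.le_succ _)
          have hsum : (0:ℝ) ≤ ∑ i ∈ t, ‖(f i - g i)‖ :=
            Finset.sum_nonneg fun i _ => norm_nonneg _
          have habs : (0:ℝ) ≤ ‖(f a - g a)‖ := norm_nonneg _
          have hps : M ^ (t.card+1) = M * M ^ t.card := by ring
          nlinarith [mul_le_mul_of_nonneg_left hMM habs]

-- pow minus one
lemma abs_pow_sub_one {a : ℂ} (ha : ‖a‖ ≤ 2) (k : ℕ) :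
    ‖(a ^ k - 1)‖ ≤ 2 ^ k * ‖(a - 1)‖ := by
  induction k with
  | zero => simp
  | succ n ih =>
    have key : a ^ (n+1) - 1 = a ^ n * (a - 1) + (a ^ n - 1) := by ring
    rw [key]
    have h1 : ‖(a ^ n * (a - 1))‖ ≤ 2 ^ n * ‖(a - 1)‖ := by
      rw [norm_mul, norm_pow]
      exact mul_le_mul_of_nonneg_right (pow_le_pow_left₀ (norm_nonneg _) ha n) (norm_nonneg _)
    calc ‖_‖ ≤ _ := norm_add_le _ _
      _ ≤ 2 ^ n * ‖(a - 1)‖ + 2 ^ n * ‖(a - 1)‖ := add_le_add h1 ih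
      _ = 2 ^ (n+1) * ‖(a - 1)‖ := by ring

lemma cosh_one_le_two : Real.cosh 1 ≤ 2 := by
  rw [Real.cosh_eq]
  have h1 := Real.exp_one_lt_d9
  have h2 : Real.exp (-1) ≤ 1 := by rw [Real.exp_le_one_iff]; norm_num
  linarith

lemma cosh_le_two_sinh {t : ℝ} (ht : 1 ≤ t) : Real.cosh t ≤ 2 * Real.sinh t := by
  rw [Real.cosh_eq, Real.sinh_eq]
  have h1 : 2 * t + 1 ≤ Real.exp (2 * t) := by linarith [Real.add_one_le_exp (2*t)]
  have h2 : Real.exp (2 * t) = Real.exp t * Real.exp t := by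
    rw [two_mul, Real.exp_add]
  have h3 := Real.exp_pos t
  have h4 : Real.exp (-t) = (Real.exp t)⁻¹ := Real.exp_neg t
  rw [h4]
  have h5 : (Real.exp t)⁻¹ * Real.exp t = 1 := inv_mul_cancel₀ (ne_of_gt h3)
  nlinarith

lemma F_upper {m : ℝ} (hm0 : 0 < m) (hm1 : m ≤ 1) {w z : ℂ} (hre : w.re = -z.re)
    (hden : m ≤ ‖(Complex.sinh z)‖) :
    ‖(Complex.sinh w / Complex.sinh z)‖ ≤ 2 / m := by
  rw [norm_div]
  have hw : ‖(Complex.sinh w)‖ ≤ Real.cosh z.re := by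
    have h := abs_sinh_le w
    rw [hre, Real.cosh_neg] at h
    exact h
  rcases le_or_gt (|z.re|) 1 with h | h
  · have hc : Real.cosh z.re ≤ Real.cosh 1 := by
      rw [Real.cosh_le_cosh, abs_one]; exact h
    exact div_le_div₀ (by positivity) (by linarith [cosh_one_le_two]) hm0 hden
  · have hs0 : 0 < Real.sinh |z.re| := Real.sinh_pos_iff.mpr (by linarith)
    have hsl : Real.sinh |z.re| ≤ ‖(Complex.sinh z)‖ := by
      rw [← Real.abs_sinh]
      exact sinh_re_le_abs_sinh z
    have h2s : Real.cosh z.re ≤ 2 * Real.sinh |z.re| := by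
      rw [← Real.cosh_abs]
      exact cosh_le_two_sinh (by linarith)
    have step : ‖(Complex.sinh w)‖ / ‖(Complex.sinh z)‖
        ≤ (2 * Real.sinh |z.re|) / Real.sinh |z.re| :=
      div_le_div₀ (by positivity) (by linarith) hs0 hsl
    have heq : (2 * Real.sinh |z.re|) / Real.sinh |z.re| = 2 := by
      field_simp
    rw [heq] at step
    have : (2:ℝ) ≤ 2/m := by
      rw [le_div_iff₀ hm0]; nlinarith
    linarith

lemma sinh_lb_y {ζ α ε : ℝ} {y l : ℂ}
    (hζ0 : 0 < ζ) (hζπ : ζ < π) (hα : 0 < α)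
    (hy : |y.im| < π/2)
    (hd1 : α ≤ ‖(y - Complex.I * ((min ζ (π-ζ) : ℝ) : ℂ))‖)
    (hd2 : α ≤ ‖(y + Complex.I * ((min ζ (π-ζ) : ℝ) : ℂ))‖)
    (hε : 0 < ε) (hεα : ε ≤ α/8) (hεβ : ε ≤ min (α/2) (π/2) / 2) (hε1 : ε ≤ 1/2)
    (hl : ‖l‖ ≤ ε) :
    min (Real.sinh (α/4)) (Real.sin (min (α/2) (π/2) / 2))
      ≤ ‖(Complex.sinh (Complex.I * (ζ:ℂ) + l - y))‖ := by
  have hpi := Real.pi_pos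
  set ζm := min ζ (π - ζ) with hζm
  set β := min (α/2) (π/2) with hβdef
  have hβ0 : 0 < β := lt_min (by linarith) (by linarith)
  have hβπ : β ≤ π/2 := min_le_right _ _
  have hβα : β ≤ α/2 := min_le_left _ _
  set z := Complex.I * (ζ:ℂ) + l - y with hz
  have hzre : z.re = l.re - y.re := by simp [hz]
  have hzim : z.im = ζ + l.im - y.im := by simp [hz]
  have hlre : |l.re| ≤ ε := (Complex.abs_re_le_norm l).trans hl
  have hlim : |l.im| ≤ ε := (Complex.abs_im_le_norm l).trans hl
  rcases le_or_gt (α/2) (|y.re|) with hcase | hcase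
  · -- big real part
    refine le_trans (min_le_left _ _) ?_
    have h1 : α/4 ≤ |z.re| := by
      rw [hzre]
      rcases abs_cases y.re with ⟨he, _⟩ | ⟨he, _⟩ <;>
        rcases abs_cases (l.re - y.re) with ⟨hf, _⟩ | ⟨hf, _⟩ <;>
        rcases abs_cases l.re with ⟨hg, _⟩ | ⟨hg, _⟩ <;> linarith
    calc Real.sinh (α/4) ≤ Real.sinh |z.re| := Real.sinh_le_sinh.mpr h1
      _ = |Real.sinh z.re| := (Real.abs_sinh _).symm
      _ ≤ _ := sinh_re_le_abs_sinh z
  · -- small real part: use sin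
    refine le_trans (min_le_right _ _) ?_
    have hζmpos : 0 < ζm := lt_min hζ0 (by linarith)
    have hζmπ : ζm ≤ π/2 := by
      rcases le_total ζ (π - ζ) with h | h
      · rw [hζm, min_eq_left h]; linarith
      · rw [hζm, min_eq_right h]; linarith
    -- distance conditions give |y.im ∓ ζm| ≥ β
    have hsq1 : α^2 ≤ y.re^2 + (y.im - ζm)^2 := by
      have := hd1
      have habs : (‖(y - Complex.I * (ζm:ℂ))‖)^2 = y.re^2 + (y.im - ζm)^2 := by
        rw [Complex.sq_norm, Complex.normSq_apply]
        simp
        ring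
      nlinarith [norm_nonneg (y - Complex.I * (ζm:ℂ))]
    have hsq2 : α^2 ≤ y.re^2 + (y.im + ζm)^2 := by
      have habs : (‖(y + Complex.I * (ζm:ℂ))‖)^2 = y.re^2 + (y.im + ζm)^2 := by
        rw [Complex.sq_norm, Complex.normSq_apply]
        simp
        ring
      nlinarith [norm_nonneg (y + Complex.I * (ζm:ℂ))]
    have hyre2 : y.re^2 ≤ (α/2)^2 := by
      have h := pow_lt_pow_left₀ hcase (abs_nonneg y.re) two_ne_zero
      rw [_root_.sq_abs] at h
      linarith
    have hg1 : (α/2)^2 ≤ (y.im - ζm)^2 := by nlinarith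
    have hg2 : (α/2)^2 ≤ (y.im + ζm)^2 := by nlinarith
    have hb1 : β ≤ |y.im - ζm| := by
      rcases abs_cases (y.im - ζm) with ⟨he, hs⟩ | ⟨he, hs⟩ <;> nlinarith
    have hb2 : β ≤ |y.im + ζm| := by
      rcases abs_cases (y.im + ζm) with ⟨he, hs⟩ | ⟨he, hs⟩ <;> nlinarith
    -- deduce distance of ζ - y.im from 0 and π
    have hθ1 : β ≤ |ζ - y.im| := by
      rcases le_total ζ (π - ζ) with h | h
      · rw [hζm, min_eq_left h] at hb1
        rcases abs_cases (y.im - ζ) with ⟨he, _⟩ | ⟨he, _⟩ <;>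
          rcases abs_cases (ζ - y.im) with ⟨hf, _⟩ | ⟨hf, _⟩ <;> linarith
      · rw [hζm, min_eq_right h] at hb1
        rcases abs_cases (y.im - (π - ζ)) with ⟨he, _⟩ | ⟨he, _⟩ <;>
          rcases abs_cases (ζ - y.im) with ⟨hf, _⟩ | ⟨hf, _⟩ <;>
          rcases abs_cases y.im with ⟨hg, _⟩ | ⟨hg, _⟩ <;> linarith
    have hθ2 : β ≤ |ζ - y.im - π| := by
      rcases le_total ζ (π - ζ) with h | h
      · rw [hζm, min_eq_left h] at hb2
        rcases abs_cases (y.im + ζ) with ⟨he, _⟩ | ⟨he, _⟩ <;>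
          rcases abs_cases (ζ - y.im - π) with ⟨hf, _⟩ | ⟨hf, _⟩ <;>
          rcases abs_cases y.im with ⟨hg, _⟩ | ⟨hg, _⟩ <;> linarith
      · rw [hζm, min_eq_right h] at hb2
        rcases abs_cases (y.im + (π - ζ)) with ⟨he, _⟩ | ⟨he, _⟩ <;>
          rcases abs_cases (ζ - y.im - π) with ⟨hf, _⟩ | ⟨hf, _⟩ <;> linarith
    -- apply abs_sin_lb with b = β/2, θ = z.im
    have key : Real.sin (β/2) ≤ |Real.sin z.im| := by
      apply abs_sin_lb (by linarith) (by linarith) _ _ _ _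
      · rw [hzim]
        rcases abs_cases y.im with ⟨hg, _⟩ | ⟨hg, _⟩ <;>
          rcases abs_cases l.im with ⟨hh, _⟩ | ⟨hh, _⟩ <;> linarith
      · rw [hzim]
        rcases abs_cases y.im with ⟨hg, _⟩ | ⟨hg, _⟩ <;>
          rcases abs_cases l.im with ⟨hh, _⟩ | ⟨hh, _⟩ <;> linarith
      · rw [hzim]
        rcases abs_cases (ζ - y.im) with ⟨he, _⟩ | ⟨he, _⟩ <;>
          rcases abs_cases (ζ + l.im - y.im) with ⟨hf, _⟩ | ⟨hf, _⟩ <;>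
          rcases abs_cases l.im with ⟨hh, _⟩ | ⟨hh, _⟩ <;> linarith
      · rw [hzim]
        rcases abs_cases (ζ - y.im - π) with ⟨he, _⟩ | ⟨he, _⟩ <;>
          rcases abs_cases (ζ + l.im - y.im - π) with ⟨hf, _⟩ | ⟨hf, _⟩ <;>
          rcases abs_cases l.im with ⟨hh, _⟩ | ⟨hh, _⟩ <;> linarith
    exact key.trans (sin_im_le_abs_sinh z)

lemma sinh_lb_small {ζ : ℝ} (hζ0 : 0 < ζ) (hζπ : ζ < π) {z : ℂ}
    (him : |z.im - ζ| ≤ min ζ (π-ζ) / 2) :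
    Real.sin (min ζ (π-ζ) / 2) ≤ ‖(Complex.sinh z)‖ := by
  set ζm := min ζ (π - ζ) with hζm
  have hζmpos : 0 < ζm := lt_min hζ0 (by linarith)
  have h1 : ζm ≤ ζ := min_le_left _ _
  have h2 : ζm ≤ π - ζ := min_le_right _ _
  have key : Real.sin (ζm/2) ≤ Real.sin z.im := by
    apply sin_lb_of_mem (by linarith)
    · rcases abs_cases (z.im - ζ) with ⟨he, _⟩ | ⟨he, _⟩ <;> linarith
    · rcases abs_cases (z.im - ζ) with ⟨he, _⟩ | ⟨he, _⟩ <;> linarith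
  exact key.trans ((le_abs_self _).trans (sin_im_le_abs_sinh z))

lemma R_close {ζ : ℝ} (hζ0 : 0 < ζ) (hζπ : ζ < π) {μ : ℂ}
    (hμζ : |μ.im| ≤ min ζ (π-ζ) / 2) (hμ1 : ‖μ‖ ≤ 1) :
    ‖(Complex.sinh (Complex.I * (ζ:ℂ) + μ) / Complex.sinh (Complex.I * (ζ:ℂ) - μ) - 1)‖
      ≤ 4 * ‖μ‖ / Real.sin (min ζ (π-ζ) / 2) := by
  set ζm := min ζ (π - ζ) with hζm
  have hζmpos : 0 < ζm := lt_min hζ0 (by linarith)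
  have hζmπ : ζm ≤ π/2 := by
    rcases le_total ζ (π - ζ) with h | h
    · rw [hζm, min_eq_left h]; linarith
    · rw [hζm, min_eq_right h]; linarith
  have hsin : 0 < Real.sin (ζm/2) :=
    Real.sin_pos_of_pos_of_lt_pi (by linarith) (by linarith [Real.pi_pos])
  have hden : Real.sin (ζm/2) ≤ ‖(Complex.sinh (Complex.I * (ζ:ℂ) - μ))‖ := by
    apply sinh_lb_small hζ0 hζπ
    have : (Complex.I * (ζ:ℂ) - μ).im = ζ - μ.im := by simp
    rw [this]
    rcases abs_cases μ.im with ⟨he, _⟩ | ⟨he, _⟩ <;>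
      rcases abs_cases (ζ - μ.im - ζ) with ⟨hf, _⟩ | ⟨hf, _⟩ <;> linarith
  have hne : Complex.sinh (Complex.I * (ζ:ℂ) - μ) ≠ 0 := by
    intro h; rw [h] at hden; simp at hden; linarith
  rw [div_sub_one hne]
  have hid : Complex.sinh (Complex.I * (ζ:ℂ) + μ) - Complex.sinh (Complex.I * (ζ:ℂ) - μ)
      = 2 * Complex.cosh (Complex.I * (ζ:ℂ)) * Complex.sinh μ := sinh_diff_id _ _
  rw [hid, norm_div]
  have hnum : ‖(2 * Complex.cosh (Complex.I * (ζ:ℂ)) * Complex.sinh μ)‖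
      ≤ 4 * ‖μ‖ := by
    rw [norm_mul, norm_mul]
    have hc : ‖(Complex.cosh (Complex.I * (ζ:ℂ)))‖ ≤ 1 := by
      have := abs_cosh_le (Complex.I * (ζ:ℂ))
      simpa using this
    have hs : ‖(Complex.sinh μ)‖ ≤ 2 * ‖μ‖ := abs_sinh_lin hμ1
    have h2 : ‖(2:ℂ)‖ = 2 := by norm_num
    rw [h2]
    nlinarith [norm_nonneg (Complex.sinh μ), norm_nonneg μ,
      norm_nonneg (Complex.cosh (Complex.I * (ζ:ℂ)))]
  exact div_le_div₀ (by positivity) hnum hsin hden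

lemma F_close {m : ℝ} (hm : 0 < m) {u v l : ℂ} (huv : (u+v).re = 0)
    (h1 : m ≤ ‖(Complex.sinh (l + v))‖) (h2 : m ≤ ‖(Complex.sinh v)‖)
    (hl : ‖l‖ ≤ 1) :
    ‖(Complex.sinh (u - l) / Complex.sinh (l + v) - Complex.sinh u / Complex.sinh v)‖
      ≤ 2 * ‖l‖ / (m * m) := by
  have hne1 : Complex.sinh (l + v) ≠ 0 := by
    intro h; rw [h] at h1; simp at h1; linarith
  have hne2 : Complex.sinh v ≠ 0 := by
    intro h; rw [h] at h2; simp at h2; linarith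
  rw [div_sub_div _ _ hne1 hne2]
  have hid : Complex.sinh (u - l) * Complex.sinh v - Complex.sinh (l + v) * Complex.sinh u
      = -(Complex.sinh (u + v) * Complex.sinh l) := by
    rw [mul_comm (Complex.sinh (l + v)) (Complex.sinh u)]
    exact sinh_prod_id u v l
  rw [hid, norm_div, norm_neg, norm_mul]
  have hnum : ‖(Complex.sinh (u+v))‖ * ‖(Complex.sinh l)‖
      ≤ 2 * ‖l‖ := by
    have ha : ‖(Complex.sinh (u+v))‖ ≤ 1 := by
      have := abs_sinh_le (u+v)
      rw [huv] at this
      simpa using this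
    have hb : ‖(Complex.sinh l)‖ ≤ 2 * ‖l‖ := abs_sinh_lin hl
    nlinarith [norm_nonneg (Complex.sinh l), norm_nonneg (Complex.sinh (u+v)),
      norm_nonneg l]
  have hden : m * m ≤ ‖(Complex.sinh (l+v) * Complex.sinh v)‖ := by
    rw [norm_mul]
    nlinarith
  exact div_le_div₀ (by positivity) hnum (by positivity) hden


lemma tri_aux (u w : ℂ) :
    ‖(w + 1)‖ ≤ ‖(1 + u)‖ + ‖(u - w)‖ := by
  have e : w + 1 = (1 + u) + (w - u) := by ring
  rw [e]
  refine (norm_add_le _ _).trans ?_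
  rw [norm_sub_rev w u]


/-- **Lemma 5.2.** Fix `n_x, n_y ≥ 0`, `n_κ ∈ ℤ` and `α, ρ > 0`.  There exists
`0 < ε < α/2` such that for every pair `X, Y` in the class `C^ε_{α,ρ}` with cardinalities
`n_x, n_y` and every `κ` in the closed disc `D̄_{0,ε}`, one has `|1 + f(λ)| ≥ ρ/2` on
`D̄_{0,ε}`; in particular `1 + f` has no zeroes there. -/
theorem one_add_f_lower_bound (ζ : ℝ) (hζ : ζ ∈ Set.Ioo 0 Real.pi)
    (s : ℤ) (nx ny : ℕ) (nκ : ℤ) (α ρ : ℝ) (hα : 0 < α) (hρ : 0 < ρ) :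
    ∃ ε : ℝ, 0 < ε ∧ ε < α / 2 ∧
      ∀ (x : Fin nx → ℂ) (y : Fin ny → ℂ), InClassFam ζ ε α ρ s x y →
        ∀ κ ∈ Metric.closedBall (0 : ℂ) ε, ∀ lam ∈ Metric.closedBall (0 : ℂ) ε,
          ρ / 2 ≤ Norm.norm (1 + fProd ζ s x y nκ κ lam) ∧
          1 + fProd ζ s x y nκ κ lam ≠ 0 := by
  obtain ⟨hζ0, hζπ⟩ := hζ
  have hpi := Real.pi_pos
  obtain ⟨ζm, hζmdef⟩ : ∃ t : ℝ, t = min ζ (Real.pi - ζ) := ⟨_, rfl⟩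
  have hζm0 : 0 < ζm := hζmdef ▸ lt_min hζ0 (by linarith)
  have hζmle : ζm ≤ ζ := hζmdef ▸ min_le_left _ _
  have hζmle2 : ζm ≤ Real.pi - ζ := hζmdef ▸ min_le_right _ _
  have hζmπ : ζm ≤ Real.pi/2 := by
    rcases le_total ζ (Real.pi - ζ) with h | h
    · rw [hζmdef, min_eq_left h]; linarith
    · rw [hζmdef, min_eq_right h]; linarith
  obtain ⟨β, hβdef⟩ : ∃ t : ℝ, t = min (α/2) (Real.pi/2) := ⟨_, rfl⟩
  have hβ0 : 0 < β := hβdef ▸ lt_min (by linarith) (by linarith)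
  have hβπ : β ≤ Real.pi/2 := hβdef ▸ min_le_right _ _
  obtain ⟨m, hmdef⟩ : ∃ t : ℝ, t = min (Real.sinh (α/4)) (Real.sin (β/2)) := ⟨_, rfl⟩
  have hm0 : 0 < m := hmdef ▸ lt_min (Real.sinh_pos_iff.mpr (by linarith))
    (Real.sin_pos_of_pos_of_lt_pi (by linarith) (by linarith))
  have hm1 : m ≤ 1 := hmdef ▸ le_trans (min_le_right _ _) (Real.sin_le_one _)
  obtain ⟨m₂, hm₂def⟩ : ∃ t : ℝ, t = Real.sin (ζm/2) := ⟨_, rfl⟩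
  have hm₂0 : 0 < m₂ := hm₂def ▸ Real.sin_pos_of_pos_of_lt_pi (by linarith) (by linarith)
  obtain ⟨M, hMdef⟩ : ∃ t : ℝ, t = 2/m := ⟨_, rfl⟩
  have hM1 : 1 ≤ M := by rw [hMdef, le_div_iff₀ hm0]; linarith
  have hM0 : (0:ℝ) ≤ M := by linarith
  obtain ⟨K, hKdef⟩ : ∃ t : ℕ, t = nκ.natAbs := ⟨_, rfl⟩
  have h2K1 : (1:ℝ) ≤ 2^K := by
    calc (1:ℝ) = 2^(0:ℕ) := by norm_num
      _ ≤ 2^K := pow_le_pow_right₀ (by norm_num) (Nat.zero_le K)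
  obtain ⟨CD, hCDdef⟩ : ∃ t : ℝ, t = 2^K * 2 + 2^K * 2^nx * nx := ⟨_, rfl⟩
  have hCD2 : 2 ≤ CD := by
    have h2 : (0:ℝ) ≤ 2^K * 2^nx * nx := by positivity
    rw [hCDdef]
    linarith only [h2, h2K1]
  obtain ⟨Ctot, hCtotdef⟩ : ∃ t : ℝ, t = 2 * M^ny * (ny * (2/(m*m)) + CD * (8/m₂)) := ⟨_, rfl⟩
  have hMny : (0:ℝ) < M^ny := pow_pos (by linarith) _
  have hmm0 : (0:ℝ) < m*m := mul_pos hm0 hm0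
  have hCtot0 : 0 < Ctot := by
    have h1 : (0:ℝ) ≤ (ny:ℝ) * (2/(m*m)) :=
      mul_nonneg (Nat.cast_nonneg _) (le_of_lt (div_pos two_pos hmm0))
    have h2 : (0:ℝ) < CD * (8/m₂) := mul_pos (by linarith) (div_pos (by norm_num) hm₂0)
    rw [hCtotdef]
    have h3 : (0:ℝ) < 2 * M^ny := by linarith
    exact mul_pos h3 (by linarith)
  obtain ⟨ε, hεdef⟩ : ∃ t : ℝ, t = min (min (min (α/8) (1/2)) (min (β/2) (ζm/4)))
    (min (m₂/(32*CD)) (ρ/(2*Ctot+1))) := ⟨_, rfl⟩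
  have hε0 : 0 < ε := by
    rw [hεdef]
    refine lt_min (lt_min (lt_min ?_ ?_) (lt_min ?_ ?_)) (lt_min ?_ ?_)
    · linarith
    · norm_num
    · linarith
    · linarith
    · exact div_pos hm₂0 (by linarith)
    · exact div_pos hρ (by linarith)
  have hεα : ε ≤ α/8 := by
    rw [hεdef]
    exact le_trans (min_le_left _ _) (le_trans (min_le_left _ _) (min_le_left _ _))
  have hεhalf : ε ≤ 1/2 := by
    rw [hεdef]
    exact le_trans (min_le_left _ _) (le_trans (min_le_left _ _) (min_le_right _ _))
  have hεβ : ε ≤ β/2 := by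
    rw [hεdef]
    exact le_trans (min_le_left _ _) (le_trans (min_le_right _ _) (min_le_left _ _))
  have hεζm : ε ≤ ζm/4 := by
    rw [hεdef]
    exact le_trans (min_le_left _ _) (le_trans (min_le_right _ _) (min_le_right _ _))
  have hεCD : ε ≤ m₂/(32*CD) := by
    rw [hεdef]
    exact le_trans (min_le_right _ _) (min_le_left _ _)
  have hερ : ε ≤ ρ/(2*Ctot+1) := by
    rw [hεdef]
    exact le_trans (min_le_right _ _) (min_le_right _ _)
  refine ⟨ε, hε0, by linarith only [hεα, hα], ?_⟩
  intro x y hcl κ hκ lam hlam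
  obtain ⟨hinjx, hinjy, hxball, hyset, hρcl⟩ := hcl
  have hκa : ‖κ‖ ≤ ε := by simpa [Complex.dist_eq] using hκ
  have hlama : ‖lam‖ ≤ ε := by simpa [Complex.dist_eq] using hlam
  have hxa : ∀ a, ‖(x a)‖ ≤ ε := fun a =>
    le_of_lt (by simpa [Complex.dist_eq] using hxball a)
  have hyim : ∀ b, |(y b).im| < Real.pi/2 := fun b => (hyset b).1
  have hyd1 : ∀ b, α ≤ ‖(y b - Complex.I * (ζm:ℂ))‖ := by
    intro b
    have h := (hyset b).2
    simp only [Set.mem_union, not_or, Metric.mem_ball, Complex.dist_eq, not_lt, zetam] at h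
    rw [hζmdef]
    exact h.1.2
  have hyd2 : ∀ b, α ≤ ‖(y b + Complex.I * (ζm:ℂ))‖ := by
    intro b
    have h := (hyset b).2
    simp only [Set.mem_union, not_or, Metric.mem_ball, Complex.dist_eq, not_lt, zetam,
      sub_neg_eq_add] at h
    rw [hζmdef]
    exact h.2
  -- lower bound for y-denominators
  have hdenl : ∀ (l : ℂ), ‖l‖ ≤ ε → ∀ b,
      m ≤ ‖(Complex.sinh (Complex.I * (ζ:ℂ) + l - y b))‖ := by
    intro l hl b
    have hd1 : α ≤ ‖(y b - Complex.I * ((min ζ (Real.pi - ζ) : ℝ) : ℂ))‖ := by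
      rw [← hζmdef]; exact hyd1 b
    have hd2 : α ≤ ‖(y b + Complex.I * ((min ζ (Real.pi - ζ) : ℝ) : ℂ))‖ := by
      rw [← hζmdef]; exact hyd2 b
    have h := sinh_lb_y (ζ := ζ) (α := α) (ε := ε) (y := y b) (l := l)
      hζ0 hζπ hα (hyim b) hd1 hd2 hε0 hεα (by rw [← hβdef]; exact hεβ) hεhalf hl
    rw [hmdef, hβdef]
    exact h
  have hden0 : ∀ b, m ≤ ‖(Complex.sinh (Complex.I * (ζ:ℂ) - y b))‖ := by
    intro b
    have h := hdenl 0 (by simpa using le_of_lt hε0) b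
    have e : Complex.I * (ζ:ℂ) + 0 - y b = Complex.I * (ζ:ℂ) - y b := by ring
    rwa [e] at h
  -- upper bound for y-factors
  have hFlam : ∀ b, ‖(Complex.sinh (Complex.I * (ζ:ℂ) + y b - lam) /
      Complex.sinh (Complex.I * (ζ:ℂ) + lam - y b))‖ ≤ M := by
    intro b
    rw [hMdef]
    apply F_upper hm0 hm1 ?_ (hdenl lam hlama b)
    simp only [Complex.add_re, Complex.sub_re, Complex.mul_re, Complex.I_re, Complex.I_im,
      Complex.ofReal_re, Complex.ofReal_im]
    ring
  have hF0 : ∀ b, ‖(Complex.sinh (Complex.I * (ζ:ℂ) + y b) /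
      Complex.sinh (Complex.I * (ζ:ℂ) - y b))‖ ≤ M := by
    intro b
    rw [hMdef]
    apply F_upper hm0 hm1 ?_ (hden0 b)
    simp only [Complex.add_re, Complex.sub_re, Complex.mul_re, Complex.I_re, Complex.I_im,
      Complex.ofReal_re, Complex.ofReal_im]
    ring
  -- difference of y-factors
  have hFdiff : ∀ b, ‖(Complex.sinh (Complex.I * (ζ:ℂ) + y b - lam) / Complex.sinh (Complex.I * (ζ:ℂ) + lam - y b)
        - Complex.sinh (Complex.I * (ζ:ℂ) + y b) / Complex.sinh (Complex.I * (ζ:ℂ) - y b))‖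
      ≤ 2*ε/(m*m) := by
    intro b
    have hden_eq : Complex.I * (ζ:ℂ) + lam - y b = lam + (Complex.I * (ζ:ℂ) - y b) := by ring
    rw [hden_eq]
    have h := F_close (m := m) hm0 (u := Complex.I * (ζ:ℂ) + y b) (v := Complex.I * (ζ:ℂ) - y b)
      (l := lam) ?_ ?_ (hden0 b) (by linarith only [hlama, hεhalf])
    · refine h.trans ?_
      exact div_le_div₀ (by linarith only [hε0]) (by linarith only [hlama]) hmm0 le_rfl
    · simp only [Complex.add_re, Complex.sub_re, Complex.mul_re, Complex.I_re, Complex.I_im,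
        Complex.ofReal_re, Complex.ofReal_im]
      ring
    · rw [← hden_eq]; exact hdenl lam hlama b
  -- x and κ factors close to 1
  obtain ⟨η, hηdef⟩ : ∃ t : ℝ, t = 8*ε/m₂ := ⟨_, rfl⟩
  have hη0 : 0 ≤ η := by
    rw [hηdef]
    exact div_nonneg (by linarith only [hε0]) (le_of_lt hm₂0)
  have hRgen : ∀ (w : ℂ), ‖w‖ ≤ ε → ‖(Complex.sinh (Complex.I * (ζ:ℂ) + w - lam) / Complex.sinh (Complex.I * (ζ:ℂ) + lam - w) - 1)‖
      ≤ η := by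
    intro w hw
    rw [hηdef]
    have e1 : Complex.I * (ζ:ℂ) + w - lam = Complex.I * (ζ:ℂ) + (w - lam) := by ring
    have e2 : Complex.I * (ζ:ℂ) + lam - w = Complex.I * (ζ:ℂ) - (w - lam) := by ring
    rw [e1, e2]
    have hμ : ‖(w - lam)‖ ≤ 2*ε := by
      have := norm_sub_le w lam
      linarith only [this, hw, hlama]
    have h := R_close (ζ := ζ) hζ0 hζπ (μ := w - lam) ?_ ?_
    · refine h.trans ?_
      have hsinpos : (0:ℝ) < Real.sin (min ζ (Real.pi - ζ)/2) := by
        rw [← hζmdef, ← hm₂def]; exact hm₂0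
      have h2 : 4 * ‖(w - lam)‖ / Real.sin (min ζ (Real.pi - ζ)/2)
          ≤ 8*ε/Real.sin (min ζ (Real.pi - ζ)/2) :=
        div_le_div₀ (by linarith only [hε0]) (by linarith only [hμ]) hsinpos le_rfl
      refine h2.trans ?_
      rw [← hζmdef, ← hm₂def]
    · have him : |(w - lam).im| ≤ ‖(w - lam)‖ := Complex.abs_im_le_norm _
      rw [← hζmdef]
      linarith only [him, hμ, hεζm]
    · linarith only [hμ, hεhalf]
  have hRx : ∀ a, ‖(Complex.sinh (Complex.I * (ζ:ℂ) + x a - lam) / Complex.sinh (Complex.I * (ζ:ℂ) + lam - x a) - 1)‖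
      ≤ η := fun a => hRgen (x a) (hxa a)
  have hRκ1 : ‖(Complex.sinh (Complex.I * (ζ:ℂ) + κ - lam) / Complex.sinh (Complex.I * (ζ:ℂ) + lam - κ) - 1)‖
      ≤ η := hRgen κ hκa
  have hCDη : CD * η ≤ 1/4 := by
    have h1 : ε * (32*CD) ≤ m₂ := by
      rw [← le_div_iff₀ (by linarith only [hCD2])]
      exact hεCD
    have e : CD * η = (8*CD*ε)/m₂ := by rw [hηdef]; ring
    rw [e, div_le_iff₀ hm₂0]
    linarith only [h1]
  have hη18 : η ≤ 1/8 := by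
    linarith only [hCDη, mul_nonneg (by linarith only [hCD2] : (0:ℝ) ≤ CD - 2) hη0]
  -- shorthand
  set Rκ : ℂ := Complex.sinh (Complex.I * (ζ:ℂ) + κ - lam) /
    Complex.sinh (Complex.I * (ζ:ℂ) + lam - κ) with hRκdef
  set Px : ℂ := ∏ a, Complex.sinh (Complex.I * (ζ:ℂ) + x a - lam) /
    Complex.sinh (Complex.I * (ζ:ℂ) + lam - x a) with hPxdef
  set Py : ℂ := ∏ b, Complex.sinh (Complex.I * (ζ:ℂ) + y b - lam) /
    Complex.sinh (Complex.I * (ζ:ℂ) + lam - y b) with hPydef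
  set P0 : ℂ := ∏ b, Complex.sinh (Complex.I * (ζ:ℂ) + y b) /
    Complex.sinh (Complex.I * (ζ:ℂ) - y b) with hP0def
  have hRxabs : ∀ a, ‖(Complex.sinh (Complex.I * (ζ:ℂ) + x a - lam) /
      Complex.sinh (Complex.I * (ζ:ℂ) + lam - x a))‖ ≤ 2 := by
    intro a
    set R := Complex.sinh (Complex.I * (ζ:ℂ) + x a - lam) /
      Complex.sinh (Complex.I * (ζ:ℂ) + lam - x a)
    have h := hRx a
    calc ‖R‖ ≤ ‖(R - 1)‖ + 1 := by
          have h2 := norm_add_le (R - 1) 1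
          simpa using h2
      _ ≤ 2 := by linarith only [h, hη18]
  -- Py bounds
  have hPy_sub : ‖(Py - P0)‖ ≤ M^ny * (ny * (2*ε/(m*m))) := by
    have h := abs_prod_sub_prod Finset.univ
      (fun b => Complex.sinh (Complex.I * (ζ:ℂ) + y b - lam) /
        Complex.sinh (Complex.I * (ζ:ℂ) + lam - y b))
      (fun b => Complex.sinh (Complex.I * (ζ:ℂ) + y b) /
        Complex.sinh (Complex.I * (ζ:ℂ) - y b)) M hM1
      (fun b _ => hFlam b) (fun b _ => hF0 b)
    rw [hPydef, hP0def]
    refine h.trans ?_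
    have hcard : (Finset.univ : Finset (Fin ny)).card = ny := by simp
    rw [hcard]
    apply mul_le_mul_of_nonneg_left _ (le_of_lt hMny)
    have hsum := Finset.sum_le_card_nsmul Finset.univ
      (fun b => ‖(Complex.sinh (Complex.I * (ζ:ℂ) + y b - lam) / Complex.sinh (Complex.I * (ζ:ℂ) + lam - y b)
          - Complex.sinh (Complex.I * (ζ:ℂ) + y b) / Complex.sinh (Complex.I * (ζ:ℂ) - y b))‖)
      (2*ε/(m*m)) (fun b _ => hFdiff b)
    rw [hcard] at hsum
    refine hsum.trans ?_
    rw [nsmul_eq_mul]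
  have hP0abs : ‖P0‖ ≤ M^ny := by
    have h := abs_prod_le Finset.univ
      (fun b => Complex.sinh (Complex.I * (ζ:ℂ) + y b) /
        Complex.sinh (Complex.I * (ζ:ℂ) - y b)) M hM0 (fun b _ => hF0 b)
    rw [hP0def]
    simpa using h
  -- Px bounds
  have hPx_sub : ‖(Px - 1)‖ ≤ 2^nx * (nx * η) := by
    have h := abs_prod_sub_prod Finset.univ
      (fun a => Complex.sinh (Complex.I * (ζ:ℂ) + x a - lam) /
        Complex.sinh (Complex.I * (ζ:ℂ) + lam - x a))
      (fun _ => (1:ℂ)) 2 (by norm_num) (fun a _ => hRxabs a) (fun a _ => by simp)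
    rw [Finset.prod_const_one] at h
    rw [hPxdef]
    refine h.trans ?_
    have hcard : (Finset.univ : Finset (Fin nx)).card = nx := by simp
    rw [hcard]
    apply mul_le_mul_of_nonneg_left _ (by positivity)
    have hsum := Finset.sum_le_card_nsmul Finset.univ
      (fun a => ‖(Complex.sinh (Complex.I * (ζ:ℂ) + x a - lam) / Complex.sinh (Complex.I * (ζ:ℂ) + lam - x a)
          - 1)‖) η (fun a _ => hRx a)
    rw [hcard] at hsum
    refine hsum.trans ?_
    rw [nsmul_eq_mul]
  -- Rκ
  have hRκlow : 1/2 ≤ ‖Rκ‖ := by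
    have h1 : ‖(1:ℂ)‖ ≤ ‖Rκ‖ + ‖(1 - Rκ)‖ := by
      have := norm_add_le Rκ (1 - Rκ)
      simpa using this
    have h2 : ‖(1 - Rκ)‖ = ‖(Rκ - 1)‖ := norm_sub_rev 1 Rκ
    simp only [norm_one] at h1
    rw [h2] at h1
    linarith only [h1, hRκ1, hη18]
  have hRκ0 : Rκ ≠ 0 := by
    intro h
    rw [h] at hRκlow
    norm_num at hRκlow
  have hRκ2 : ‖Rκ‖ ≤ 2 := by
    have h2 := norm_add_le (Rκ - 1) 1
    simp only [sub_add_cancel, norm_one] at h2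
    linarith only [hRκ1, h2, hη18]
  -- zpow bounds
  have hzp : ‖(Rκ^nκ - 1)‖ ≤ 2^K * (2*η) ∧ ‖(Rκ^nκ)‖ ≤ 2^K := by
    have hRκd : ‖(Rκ - 1)‖ ≤ η := hRκ1
    have h2 : (0:ℝ) ≤ 2^K := by positivity
    rcases Int.natAbs_eq nκ with hnκ | hnκ
    · rw [hnκ, ← hKdef, zpow_natCast]
      constructor
      · refine (abs_pow_sub_one hRκ2 K).trans ?_
        linarith only [mul_le_mul_of_nonneg_left hRκd h2, mul_nonneg h2 hη0]
      · rw [norm_pow]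
        exact pow_le_pow_left₀ (norm_nonneg _) hRκ2 K
    · rw [hnκ, ← hKdef, zpow_neg, zpow_natCast, ← inv_pow]
      have hbase_abs : ‖(Rκ⁻¹)‖ ≤ 2 := by
        rw [norm_inv]
        have h := inv_anti₀ (by norm_num : (0:ℝ) < 1/2) hRκlow
        norm_num at h
        linarith only [h]
      have hbase_sub : ‖(Rκ⁻¹ - 1)‖ ≤ 2*η := by
        have e : Rκ⁻¹ - 1 = (1 - Rκ) * Rκ⁻¹ := by
          field_simp
        rw [e, norm_mul, norm_inv]
        have h2' : ‖(1 - Rκ)‖ = ‖(Rκ - 1)‖ := norm_sub_rev 1 Rκ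
        rw [h2']
        have h3 : (‖Rκ‖)⁻¹ ≤ 2 := by
          have h := inv_anti₀ (by norm_num : (0:ℝ) < 1/2) hRκlow
          norm_num at h
          linarith only [h]
        have h5 : (0:ℝ) ≤ (‖Rκ‖)⁻¹ :=
          inv_nonneg.mpr (norm_nonneg _)
        linarith only [mul_le_mul hRκd h3 h5 hη0]
      constructor
      · refine (abs_pow_sub_one hbase_abs K).trans ?_
        linarith only [mul_le_mul_of_nonneg_left hbase_sub h2]
      · rw [norm_pow]
        exact pow_le_pow_left₀ (norm_nonneg _) hbase_abs K
  obtain ⟨hzp_sub, hzp_abs⟩ := hzp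
  -- D
  set D : ℂ := Px * Rκ^nκ with hDdef
  have hD_sub : ‖(D - 1)‖ ≤ CD * η := by
    have key : D - 1 = (Px - 1) * Rκ^nκ + (Rκ^nκ - 1) := by rw [hDdef]; ring
    rw [key]
    refine (norm_add_le _ _).trans ?_
    rw [norm_mul]
    have h1 : ‖(Px - 1)‖ * ‖(Rκ^nκ)‖ ≤ (2^nx * (nx * η)) * 2^K := by
      apply mul_le_mul hPx_sub hzp_abs (norm_nonneg _)
      exact mul_nonneg (by positivity) (mul_nonneg (Nat.cast_nonneg _) hη0)
    rw [hCDdef]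
    linarith only [h1, hzp_sub]
  have hD14 : ‖(D - 1)‖ ≤ 1/4 := hD_sub.trans hCDη
  have hDlow : 1/2 ≤ ‖D‖ := by
    have h1 : ‖(1:ℂ)‖ ≤ ‖D‖ + ‖(1 - D)‖ := by
      have := norm_add_le D (1 - D)
      simpa using this
    have h2 : ‖(1 - D)‖ = ‖(D - 1)‖ := norm_sub_rev 1 D
    simp only [norm_one] at h1
    rw [h2] at h1
    linarith only [h1, hD14]
  have hD0 : D ≠ 0 := by
    intro h
    rw [h] at hDlow
    norm_num at hDlow
  -- the function f
  have habs_neg : ‖((-1:ℂ)^s)‖ = 1 := by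
    rcases Int.even_or_odd s with h | h
    · rw [h.neg_one_zpow]; simp
    · rw [h.neg_one_zpow]; simp
  have hf_eq : fProd ζ s x y nκ κ lam = (-1:ℂ)^s * (Py / D) := rfl
  have hdiff : ‖(fProd ζ s x y nκ κ lam - (-1:ℂ)^s * P0)‖ ≤ Ctot * ε := by
    rw [hf_eq]
    have e : (-1:ℂ)^s * (Py / D) - (-1:ℂ)^s * P0 = (-1:ℂ)^s * (Py / D - P0) := by ring
    rw [e, norm_mul, habs_neg, one_mul]
    have e2 : Py / D - P0 = (Py - P0 + P0 * (1 - D)) / D := by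
      field_simp
      ring
    rw [e2, norm_div]
    have hnum : ‖(Py - P0 + P0 * (1 - D))‖
        ≤ M^ny * (ny * (2*ε/(m*m))) + M^ny * (CD * η) := by
      refine (norm_add_le _ _).trans ?_
      have h1 : ‖(P0 * (1 - D))‖ ≤ M^ny * (CD * η) := by
        rw [norm_mul]
        have h2 : ‖(1 - D)‖ = ‖(D - 1)‖ := norm_sub_rev 1 D
        rw [h2]
        exact mul_le_mul hP0abs hD_sub (norm_nonneg _) (le_of_lt hMny)
      exact add_le_add hPy_sub h1
    have hnn : (0:ℝ) ≤ M^ny * (ny * (2*ε/(m*m))) + M^ny * (CD * η) := by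
      have h1 : (0:ℝ) ≤ (ny:ℝ) * (2*ε/(m*m)) :=
        mul_nonneg (Nat.cast_nonneg _)
          (div_nonneg (by linarith only [hε0]) (le_of_lt hmm0))
      have h2 : (0:ℝ) ≤ CD * η := mul_nonneg (by linarith only [hCD2]) hη0
      exact add_nonneg (mul_nonneg (le_of_lt hMny) h1) (mul_nonneg (le_of_lt hMny) h2)
    have hstep : ‖(Py - P0 + P0 * (1 - D))‖ / ‖D‖
        ≤ (M^ny * (ny * (2*ε/(m*m))) + M^ny * (CD * η)) / (1/2) :=
      div_le_div₀ hnn hnum (by norm_num) hDlow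
    refine hstep.trans_eq ?_
    rw [hCtotdef, hηdef]
    ring
  have hCε : Ctot * ε < ρ/2 := by
    have h1 : ε * (2*Ctot+1) ≤ ρ := by
      rw [← le_div_iff₀ (by linarith only [hCtot0])]
      exact hερ
    linarith only [h1, hε0]
  have htri := tri_aux (fProd ζ s x y nκ κ lam) ((-1:ℂ)^s * P0)
  have hmain : ρ/2 ≤ ‖(1 + fProd ζ s x y nκ κ lam)‖ := by
    linarith only [hρcl, htri, hdiff, hCε]
  refine ⟨hmain, ?_⟩
  intro h
  rw [h] at hmain
  norm_num at hmain
  linarith only [hmain, hρ]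

end XXZ
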